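/- Let q be a prime power of characteristic p, G_q = F_q⁺ ⋊ F_q^×, ω ∈ ℂ a primitive p-th root of unity, and tr_p : F_q → F_p the field trace. Let U = {((a₁, α), (a₂, α⁻¹)) : a₁, a₂ ∈ F_q, α ∈ F_q^×} ⊆ G_q × G_q, and define φ : U × U → ℂˣ by φ(g, h) = ω^{tr_p(α·a₂·b₁)} for g = ((a₁, α), (a₂, α⁻¹)) and h = ((b₁, β), (b₂, β⁻¹)). Then U is a subgroup of G_q × G_q and φ is a 2-cocycle on U, i.e., φ(gh, m)·φ(g, h) = φ(g, hm)·φ(h, m) for all g, h, m ∈ U. -/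

import Mathlib

/-- The action of `Fˣ` on the (multiplicative version of the) additive group of `F`
by multiplication, as a homomorphism into the automorphism group. -/
def fieldAct (F : Type*) [Field F] : Fˣ →* MulAut (Multiplicative F) where
  toFun u := AddEquiv.toMultiplicative (DistribMulAction.toAddAut Fˣ F u)
  map_one' := by ext x; simp
  map_mul' u v := by ext x; simp [mul_smul]

/-- The group `F_q⁺ ⋊ F_q^×`: pairs `(a, α)` with multiplication
`(a, α)(b, β) = (a + α·b, α·β)`. -/
abbrev Gq (F : Type*) [Field F] : Type _ :=
  SemidirectProduct (Multiplicative F) Fˣ (fieldAct F)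

/-- An element `(a, α)` of `F_q⁺ ⋊ F_q^×`. -/
abbrev Gq.mk {F : Type*} [Field F] (a : F) (α : Fˣ) : Gq F :=
  ⟨Multiplicative.ofAdd a, α⟩

def gqEquiv (F : Type*) [Field F] : Gq F ≃ (Multiplicative F × Fˣ) where
  toFun g := (g.left, g.right)
  invFun p := ⟨p.1, p.2⟩
  left_inv _ := rfl
  right_inv _ := rfl

instance (F : Type*) [Field F] [Fintype F] [DecidableEq F] : Fintype (Gq F) :=
  Fintype.ofEquiv _ (gqEquiv F).symm

instance (F : Type*) [Field F] [DecidableEq F] : DecidableEq (Gq F) :=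
  (gqEquiv F).decidableEq

/-- The carrier of `U = {((a₁, α), (a₂, α⁻¹))} ⊆ G_q × G_q`. -/
def wallSet (F : Type*) [Field F] : Set (Gq F × Gq F) :=
  {g | g.2.right = g.1.right⁻¹}

/-- The 2-cocycle value `φ(g, h) = ω^{tr_p(α·a₂·b₁)}` for
`g = ((a₁, α), (a₂, α⁻¹))` and `h = ((b₁, β), (b₂, β⁻¹))`. -/
noncomputable def wallCocycle (p : ℕ) (F : Type*) [Field F] [Algebra (ZMod p) F] (ω : ℂ) :
    Gq F × Gq F → Gq F × Gq F → ℂ :=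
  fun g h => ω ^ (Algebra.trace (ZMod p) F
    ((g.1.right : F) * Multiplicative.toAdd g.2.left * Multiplicative.toAdd h.1.left)).val

/-- `U` is a subgroup of `G_q × G_q` and `φ(g,h) = ω^{tr_p(α·a₂·b₁)}` is a 2-cocycle
on it. -/
theorem wallSet_subgroup_and_cocycle (p : ℕ) [Fact p.Prime] (F : Type*) [Field F]
    [Fintype F] [DecidableEq F] [Algebra (ZMod p) F] (ω : ℂ)
    (hω : IsPrimitiveRoot ω p) :
    ∃ U : Subgroup (Gq F × Gq F), (U : Set (Gq F × Gq F)) = wallSet F ∧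
      ∀ g h m : Gq F × Gq F, g ∈ U → h ∈ U → m ∈ U →
        wallCocycle p F ω (g * h) m * wallCocycle p F ω g h
          = wallCocycle p F ω g (h * m) * wallCocycle p F ω h m := by
  have hp : ω ^ p = 1 := hω.pow_eq_one
  have hmod : ∀ n : ℕ, ω ^ (n % p) = ω ^ n := by
    intro n
    conv_rhs => rw [← Nat.mod_add_div n p]
    rw [pow_add, pow_mul, hp, one_pow, mul_one]
  have key : ∀ x y : ZMod p, ω ^ x.val * ω ^ y.val = ω ^ (x + y).val := by
    intro x y
    rw [ZMod.val_add, hmod, pow_add]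
  have hact : ∀ (u : Fˣ) (x : Multiplicative F),
      Multiplicative.toAdd (fieldAct F u x) = (u : F) * Multiplicative.toAdd x := by
    intro u x
    simp [fieldAct, Units.smul_def]
  refine ⟨{ carrier := wallSet F
            one_mem' := by simp [wallSet]
            mul_mem' := by
              intro a b ha hb
              simp only [wallSet, Set.mem_setOf_eq] at *
              simp [Prod.snd_mul, Prod.fst_mul, ha, hb, mul_comm]
            inv_mem' := by
              intro a ha
              simp only [wallSet, Set.mem_setOf_eq] at *
              simp [Prod.snd_inv, Prod.fst_inv, ha] }, rfl, ?_⟩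
  intro g h m hg hh hm
  simp only [Subgroup.mem_mk, Submonoid.mem_mk, Subsemigroup.mem_mk, wallSet, Set.mem_setOf_eq] at hg hh hm
  simp only [wallCocycle, Prod.fst_mul, Prod.snd_mul, SemidirectProduct.mul_left,
    SemidirectProduct.mul_right, toAdd_mul, hact, hg, Units.val_mul]
  rw [key, key]
  congr 2
  simp only [← map_add]
  congr 1
  rw [Units.val_inv_eq_inv_val]
  have h0 : (g.1.right : F) ≠ 0 := Units.ne_zero _
  field_simp
  ring
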